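/- Suppose weight sequences V(t) ∈ ℝ^{M×D} and W(t) ∈ ℝ^{M×Z} satisfy, at every step t, |V_ij(t+1) − V_ij(t)| ≤ (β₁/√M) max_{kl}|W_{kl}(t)| and |W_ij(t+1) − W_ij(t)| ≤ (β₂/√M) max_{kl}|V_{kl}(t)|, and at initialization max_{ij}|V_ij(0)| ≤ c(0) and max_{ij}|W_ij(0)| ≤ c(0), where c(0) = c_θ log M. Define β = max{β₁, β₂} and c(t) = c(0)(1 + β/√M)^t. Then for every t ≥ 0, max_{ij}|V_ij(t) − V_ij(0)| ≤ c(t) − c(0) and max_{ij}|W_ij(t) − W_ij(0)| ≤ c(t) − c(0). -/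
import Mathlib


open scoped BigOperators

noncomputable section

/-- Lemma: bound on the weight difference during training under cosine
similarity. If the per-step entrywise weight changes are coupled through the max-norms with
constants `β₁/√M` and `β₂/√M`, and the initial max-norms are at most `c(0) = c_θ log M`, then
`max_{ij}|V_ij(t) − V_ij(0)| ≤ c(t) − c(0)` and likewise for `W`, where
`c(t) = c(0)(1 + β/√M)^t`, `β = max{β₁, β₂}`. -/
theorem weight_diff_bound
    (M D Z : ℕ) (hM : 0 < M) (hD : 0 < D) (hZ : 0 < Z)
    (β₁ β₂ cθ : ℝ) (hβ₁ : 0 ≤ β₁) (hβ₂ : 0 ≤ β₂)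
    (V : ℕ → Matrix (Fin M) (Fin D) ℝ) (W : ℕ → Matrix (Fin M) (Fin Z) ℝ)
    (c : ℕ → ℝ)
    (hc : ∀ t, c t = cθ * Real.log M * (1 + max β₁ β₂ / Real.sqrt M) ^ t)
    -- max-norm of the weights at initialization
    (hV0 : ∀ i j, |V 0 i j| ≤ cθ * Real.log M)
    (hW0 : ∀ i j, |W 0 i j| ≤ cθ * Real.log M)
    -- coupled per-step entrywise bounds
    (hVstep : ∀ t (i : Fin M) (j : Fin D),
      |V (t + 1) i j - V t i j| ≤ β₁ / Real.sqrt M * ⨆ k, ⨆ l, |W t k l|)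
    (hWstep : ∀ t (i : Fin M) (j : Fin Z),
      |W (t + 1) i j - W t i j| ≤ β₂ / Real.sqrt M * ⨆ k, ⨆ l, |V t k l|)
    (t : ℕ) :
    (∀ (i : Fin M) (j : Fin D), |V t i j - V 0 i j| ≤ c t - c 0)
    ∧ ∀ (i : Fin M) (j : Fin Z), |W t i j - W 0 i j| ≤ c t - c 0 := by
  have hMne : Nonempty (Fin M) := ⟨⟨0, hM⟩⟩
  have hDne : Nonempty (Fin D) := ⟨⟨0, hD⟩⟩
  have hZne : Nonempty (Fin Z) := ⟨⟨0, hZ⟩⟩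
  set r : ℝ := 1 + max β₁ β₂ / Real.sqrt M with hr
  have hsqrt : 0 < Real.sqrt M := Real.sqrt_pos.2 (by exact_mod_cast hM)
  have hβ : 0 ≤ max β₁ β₂ := le_max_of_le_left hβ₁
  have hdiv : 0 ≤ max β₁ β₂ / Real.sqrt M := div_nonneg hβ hsqrt.le
  have hr1 : 1 ≤ r := le_add_of_nonneg_right hdiv
  have hr0 : 0 ≤ r := le_trans zero_le_one hr1
  have hc00 : 0 ≤ cθ * Real.log M :=
    le_trans (abs_nonneg _) (hV0 ⟨0, hM⟩ ⟨0, hD⟩)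
  have hcnonneg : ∀ s, 0 ≤ c s := by
    intro s; rw [hc]; exact mul_nonneg hc00 (pow_nonneg hr0 s)
  have hc0 : c 0 = cθ * Real.log M := by rw [hc]; simp
  have hcsucc : ∀ s, c (s + 1) = c s * r := by
    intro s; rw [hc, hc, pow_succ]; ring
  induction t with
  | zero => constructor <;> intro i j <;> simp
  | succ t ih =>
    obtain ⟨ihV, ihW⟩ := ih
    -- entrywise bounds at time t
    have hVt : ∀ (i : Fin M) (j : Fin D), |V t i j| ≤ c t := by
      intro i j
      calc |V t i j| = |(V t i j - V 0 i j) + V 0 i j| := by ring_nf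
        _ ≤ |V t i j - V 0 i j| + |V 0 i j| := abs_add_le _ _
        _ ≤ (c t - c 0) + c 0 := add_le_add (ihV i j) (by rw [hc0]; exact hV0 i j)
        _ = c t := by ring
    have hWt : ∀ (i : Fin M) (j : Fin Z), |W t i j| ≤ c t := by
      intro i j
      calc |W t i j| = |(W t i j - W 0 i j) + W 0 i j| := by ring_nf
        _ ≤ |W t i j - W 0 i j| + |W 0 i j| := abs_add_le _ _
        _ ≤ (c t - c 0) + c 0 := add_le_add (ihW i j) (by rw [hc0]; exact hW0 i j)
        _ = c t := by ring
    have hsupW : (⨆ k, ⨆ l, |W t k l|) ≤ c t :=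
      ciSup_le fun k => ciSup_le fun l => hWt k l
    have hsupV : (⨆ k, ⨆ l, |V t k l|) ≤ c t :=
      ciSup_le fun k => ciSup_le fun l => hVt k l
    have hsupW0 : 0 ≤ ⨆ k, ⨆ l, |W t k l| := by
      refine le_trans (abs_nonneg (W t ⟨0, hM⟩ ⟨0, hZ⟩)) ?_
      exact le_ciSup_of_le (Set.Finite.bddAbove (Set.finite_range _)) ⟨0, hM⟩
        (le_ciSup_of_le (Set.Finite.bddAbove (Set.finite_range _)) ⟨0, hZ⟩ le_rfl)
    have hsupV0 : 0 ≤ ⨆ k, ⨆ l, |V t k l| := by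
      refine le_trans (abs_nonneg (V t ⟨0, hM⟩ ⟨0, hD⟩)) ?_
      exact le_ciSup_of_le (Set.Finite.bddAbove (Set.finite_range _)) ⟨0, hM⟩
        (le_ciSup_of_le (Set.Finite.bddAbove (Set.finite_range _)) ⟨0, hD⟩ le_rfl)
    constructor
    · intro i j
      calc |V (t + 1) i j - V 0 i j|
          = |(V (t + 1) i j - V t i j) + (V t i j - V 0 i j)| := by ring_nf
        _ ≤ |V (t + 1) i j - V t i j| + |V t i j - V 0 i j| := abs_add_le _ _
        _ ≤ β₁ / Real.sqrt M * (⨆ k, ⨆ l, |W t k l|) + (c t - c 0) :=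
            add_le_add (hVstep t i j) (ihV i j)
        _ ≤ max β₁ β₂ / Real.sqrt M * c t + (c t - c 0) := by
            gcongr
            exact le_max_left _ _
        _ = c t * r - c 0 := by rw [hr]; ring
        _ = c (t + 1) - c 0 := by rw [hcsucc]
    · intro i j
      calc |W (t + 1) i j - W 0 i j|
          = |(W (t + 1) i j - W t i j) + (W t i j - W 0 i j)| := by ring_nf
        _ ≤ |W (t + 1) i j - W t i j| + |W t i j - W 0 i j| := abs_add_le _ _
        _ ≤ β₂ / Real.sqrt M * (⨆ k, ⨆ l, |V t k l|) + (c t - c 0) :=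
            add_le_add (hWstep t i j) (ihW i j)
        _ ≤ max β₁ β₂ / Real.sqrt M * c t + (c t - c 0) := by
            gcongr
            exact le_max_right _ _
        _ = c t * r - c 0 := by rw [hr]; ring
        _ = c (t + 1) - c 0 := by rw [hcsucc]
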